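/- Let R be a commutative ring and let A be a 2×2 matrix over R. Then A is extendable if and only if the reduction of A modulo the principal ideal R·det(A) is a simply extendable 2×2 matrix over R/(R·det(A)). In particular, if det(A) = 0, then A is extendable if and only if A is simply extendable. -/
import Mathlib


open Matrix

/-- A `2 × 2` matrix is unimodular if its four entries generate the unit ideal. -/
def Unimodular2 {R : Type*} [CommRing R] (A : Matrix (Fin 2) (Fin 2) R) : Prop :=
  Ideal.span {A 0 0, A 0 1, A 1 0, A 1 1} = ⊤

/-- A `2 × 2` matrix is extendable if it is the top-left block of a `3 × 3` matrix
of determinant `1`. -/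
def Extendable {R : Type*} [CommRing R] (A : Matrix (Fin 2) (Fin 2) R) : Prop :=
  ∃ B : Matrix (Fin 3) (Fin 3) R, B.det = 1 ∧
    ∀ i j : Fin 2, B i.castSucc j.castSucc = A i j

/-- A `2 × 2` matrix is simply extendable if it is the top-left block of a `3 × 3` matrix
of determinant `1` whose `(3,3)` entry is `0`. -/
def SimplyExtendable {R : Type*} [CommRing R] (A : Matrix (Fin 2) (Fin 2) R) : Prop :=
  ∃ B : Matrix (Fin 3) (Fin 3) R, B.det = 1 ∧
    (∀ i j : Fin 2, B i.castSucc j.castSucc = A i j) ∧ B 2 2 = 0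

lemma fwd_aux {R : Type*} [CommRing R] (A : Matrix (Fin 2) (Fin 2) R)
    (h0 : A.det = 0) (h : Extendable A) : SimplyExtendable A := by
  obtain ⟨B, hB, htop⟩ := h
  have h00 := htop 0 0; have h01 := htop 0 1
  have h10 := htop 1 0; have h11 := htop 1 1
  simp only [Fin.castSucc_zero, Fin.castSucc_one] at h00 h01 h10 h11
  refine ⟨!![B 0 0, B 0 1, B 0 2; B 1 0, B 1 1, B 1 2; B 2 0, B 2 1, 0], ?_, ?_, ?_⟩
  · rw [Matrix.det_fin_three] at hB
    rw [Matrix.det_fin_two] at h0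
    rw [Matrix.det_fin_three]
    rw [h00, h01, h10, h11] at hB
    simp only [Matrix.of_apply, Matrix.cons_val_zero, Matrix.cons_val_one, Matrix.head_cons,
      Matrix.cons_val_two, Matrix.tail_cons, Matrix.head_fin_const, Matrix.cons_val',
      Matrix.empty_val', Matrix.cons_val_fin_one]
    rw [h00, h01, h10, h11]
    linear_combination hB - B 2 2 * h0
  · intro i j
    fin_cases i <;> fin_cases j <;>
      simp [h00, h01, h10, h11]
  · simp

theorem stmt16 (R : Type*) [CommRing R] (A : Matrix (Fin 2) (Fin 2) R) :
    (Extendable A ↔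
      SimplyExtendable (A.map (Ideal.Quotient.mk (Ideal.span {A.det})))) ∧
    (A.det = 0 → (Extendable A ↔ SimplyExtendable A)) := by
  set π := Ideal.Quotient.mk (Ideal.span {A.det}) with hπ
  have hπdet : π A.det = 0 :=
    Ideal.Quotient.eq_zero_iff_mem.mpr (Ideal.mem_span_singleton_self _)
  have hmapdet : (A.map π).det = 0 := by
    rw [← RingHom.mapMatrix_apply, ← RingHom.map_det]; exact hπdet
  constructor
  · constructor
    · rintro ⟨B, hB, htop⟩
      apply fwd_aux _ hmapdet
      refine ⟨B.map π, ?_, ?_⟩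
      · rw [← RingHom.mapMatrix_apply, ← RingHom.map_det, hB, RingHom.map_one]
      · intro i j
        simp only [Matrix.map_apply, htop]
    · rintro ⟨C, hC, htop, h22⟩
      have h00 := htop 0 0; have h01 := htop 0 1
      have h10 := htop 1 0; have h11 := htop 1 1
      simp only [Fin.castSucc_zero, Fin.castSucc_one, Matrix.map_apply] at h00 h01 h10 h11
      obtain ⟨u0, hu0⟩ := Ideal.Quotient.mk_surjective (C 0 2)
      obtain ⟨u1, hu1⟩ := Ideal.Quotient.mk_surjective (C 1 2)
      obtain ⟨v0, hv0⟩ := Ideal.Quotient.mk_surjective (C 2 0)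
      obtain ⟨v1, hv1⟩ := Ideal.Quotient.mk_surjective (C 2 1)
      rw [← hπ] at hu0 hu1 hv0 hv1
      set B0 : Matrix (Fin 3) (Fin 3) R :=
        !![A 0 0, A 0 1, u0; A 1 0, A 1 1, u1; v0, v1, 0] with hB0
      have hπB0 : π B0.det = 1 := by
        have hthis : C.det = 1 := hC
        rw [Matrix.det_fin_three, h22] at hthis
        rw [hB0, Matrix.det_fin_three]
        simp only [Matrix.of_apply, Matrix.cons_val_zero, Matrix.cons_val_one, Matrix.head_cons,
          Matrix.cons_val_two, Matrix.tail_cons, Matrix.head_fin_const, Matrix.cons_val',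
          Matrix.empty_val', Matrix.cons_val_fin_one]
        rw [h00, h01, h10, h11] at hthis
        simp only [_root_.map_add, _root_.map_sub, _root_.map_mul, map_zero]
        rw [hu0, hu1, hv0, hv1]
        linear_combination hthis
      have hmem : B0.det - 1 ∈ Ideal.span {A.det} := by
        rw [← Ideal.Quotient.eq_zero_iff_mem, ← hπ, map_sub, hπB0, RingHom.map_one, sub_self]
      obtain ⟨t, ht⟩ := Ideal.mem_span_singleton.mp hmem
      have htt : B0.det - 1 = A.det * t := ht
      rw [hB0, Matrix.det_fin_three, Matrix.det_fin_two] at htt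
      simp only [Matrix.of_apply, Matrix.cons_val_zero, Matrix.cons_val_one, Matrix.head_cons,
        Matrix.cons_val_two, Matrix.tail_cons, Matrix.head_fin_const, Matrix.cons_val',
        Matrix.empty_val', Matrix.cons_val_fin_one] at htt
      refine ⟨!![A 0 0, A 0 1, u0; A 1 0, A 1 1, u1; v0, v1, -t], ?_, ?_⟩
      · rw [Matrix.det_fin_three]
        simp only [Matrix.of_apply, Matrix.cons_val_zero, Matrix.cons_val_one, Matrix.head_cons,
          Matrix.cons_val_two, Matrix.tail_cons, Matrix.head_fin_const, Matrix.cons_val',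
          Matrix.empty_val', Matrix.cons_val_fin_one]
        linear_combination htt
      · intro i j
        fin_cases i <;> fin_cases j <;> simp
  · intro h0
    exact ⟨fwd_aux A h0, fun ⟨B, h1, h2, _⟩ => ⟨B, h1, h2⟩⟩
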